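/- Let p ∈ ℂ[M] (M ≅ ℤ^n) with full-dimensional Newton polytope, and define the Monge–Ampère polynomial μ(p) = p^{n+1}·δ(p). For λ ∈ ℚ_{>0} with p^λ ∈ ℂ[M], one has μ(p^λ) = λ^n · p^{(n+1)(λ−1)} · μ(p). -/

import Mathlib

noncomputable section

/-- Laurent polynomials in `n` variables over `ℂ`. -/
abbrev LP (n : ℕ) := AddMonoidAlgebra ℂ (Fin n → ℤ)

instance {n : ℕ} : IsDomain (LP n) := NoZeroDivisors.to_isDomain _

/-- The operator `D_i = x_i ∂/∂x_i` on Laurent polynomials: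
`D_i χ^m = m_i χ^m`. -/
def Dop {n : ℕ} (i : Fin n) (p : LP n) : LP n :=
  p.coeff.sum fun m c => AddMonoidAlgebra.single m ((m i : ℂ) * c)

/-- `δ(p) = det((D_i D_j log p)_{i,j})` as an element of the field of rational
functions; the entry `D_i D_j log p` equals `(D_iD_j p · p − D_i p · D_j p)/p²`. -/
def deltaOp {n : ℕ} (p : LP n) : FractionRing (LP n) :=
  Matrix.det (fun i j : Fin n =>
    algebraMap (LP n) (FractionRing (LP n)) (Dop i (Dop j p) * p - Dop i p * Dop j p) /
      (algebraMap (LP n) (FractionRing (LP n)) p) ^ 2)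

/-- The canonical embedding `ℤ^n → ℝ^n`. -/
def emb {n : ℕ} (m : Fin n → ℤ) : Fin n → ℝ := fun i => (m i : ℝ)

/-- The Monge–Ampère rational function `μ(p) = p^{n+1}·δ(p)` (for `p` with
full-dimensional Newton polytope it is a Laurent polynomial). -/
def muOp {n : ℕ} (p : LP n) : FractionRing (LP n) :=
  (algebraMap (LP n) (FractionRing (LP n)) p) ^ (n + 1) * deltaOp p

section AuxLemmas
variable {n : ℕ}

lemma Dop_single (i : Fin n) (m : Fin n → ℤ) (c : ℂ) :
    Dop i (AddMonoidAlgebra.single m c) = AddMonoidAlgebra.single m ((m i : ℂ) * c) := by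
  unfold Dop
  rw [AddMonoidAlgebra.coeff_single, Finsupp.sum_single_index]
  simp

lemma Dop_zero (i : Fin n) : Dop i (0 : LP n) = 0 := by
  unfold Dop; rw [AddMonoidAlgebra.coeff_zero]; exact Finsupp.sum_zero_index

lemma Dop_add (i : Fin n) (a b : LP n) : Dop i (a + b) = Dop i a + Dop i b := by
  unfold Dop
  rw [AddMonoidAlgebra.coeff_add]
  apply Finsupp.sum_add_index <;> intros <;> simp [mul_add]

lemma Dop_mul (i : Fin n) (a b : LP n) : Dop i (a * b) = Dop i a * b + a * Dop i b := by
  induction a using AddMonoidAlgebra.induction_linear with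
  | zero => simp [Dop_zero]
  | add f g hf hg => rw [add_mul, Dop_add, Dop_add, hf, hg]; ring
  | single m c =>
    induction b using AddMonoidAlgebra.induction_linear with
    | zero => simp [Dop_zero]
    | add f g hf hg => rw [mul_add, Dop_add, Dop_add, hf, hg]; ring
    | single m' c' =>
      rw [AddMonoidAlgebra.single_mul_single, Dop_single, Dop_single, Dop_single,
        AddMonoidAlgebra.single_mul_single, AddMonoidAlgebra.single_mul_single,
        ← AddMonoidAlgebra.single_add]
      congr 1
      simp only [Pi.add_apply]
      push_cast
      ring

lemma Dop_one (i : Fin n) : Dop i (1 : LP n) = 0 := by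
  rw [AddMonoidAlgebra.one_def, Dop_single]
  simp

lemma Dop_natCast (i : Fin n) (k : ℕ) : Dop i (k : LP n) = 0 := by
  induction k with
  | zero => simpa using Dop_zero i
  | succ k ih => push_cast; rw [Dop_add, ih, Dop_one, add_zero]

lemma Dop_pow (i : Fin n) (a : LP n) (k : ℕ) :
    Dop i (a ^ k) * a = (k : LP n) * (a ^ k * Dop i a) := by
  induction k with
  | zero => simp [Dop_one]
  | succ k ih =>
    rw [pow_succ, Dop_mul, add_mul, ih]
    push_cast
    ring

end AuxLemmas

/-- let `p` be a Laurent polynomial whose Newton polytope is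
full-dimensional and `λ ∈ ℚ_{>0}` with `p^λ` again a Laurent polynomial `q`
(i.e. `q^(denom λ) = p^(numer λ)`). Then `μ(p^λ) = λ^n·p^{(n+1)(λ−1)}·μ(p)`;
here the (rational) power `p^{(n+1)(λ−1)}` equals `q^{n+1}/p^{n+1}` since
`q = p^λ`. -/
theorem statement6 {n : ℕ} (p : LP n) (hp : p ≠ 0)
    (hfull : affineSpan ℝ (emb '' (p.coeff.support : Set (Fin n → ℤ))) = ⊤)
    (lam : ℚ) (hlam : 0 < lam) (q : LP n) (hq : q ^ lam.den = p ^ lam.num.toNat) :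
    muOp q =
      algebraMap (LP n) (FractionRing (LP n)) (algebraMap ℂ (LP n) ((lam : ℂ) ^ n)) *
        ((algebraMap (LP n) (FractionRing (LP n)) q) ^ (n + 1) /
          (algebraMap (LP n) (FractionRing (LP n)) p) ^ (n + 1)) * muOp p := by
  set K := FractionRing (LP n) with hK
  set φ : LP n →+* K := (algebraMap (LP n) K : LP n →+* K) with hφdef
  have hφ : Function.Injective φ := IsFractionRing.injective (LP n) K
  set d : ℕ := lam.den with hd
  set N : ℕ := lam.num.toNat with hN
  have hd0 : d ≠ 0 := lam.den_nz
  have hnum : (N : ℤ) = lam.num := Int.toNat_of_nonneg (Rat.num_pos.mpr hlam).le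
  have hq0 : q ≠ 0 := by
    intro h
    rw [h, zero_pow hd0] at hq
    exact pow_ne_zero N hp hq.symm
  have hP : φ p ≠ 0 := fun h => hp (hφ (by simpa using h))
  have hQ : φ q ≠ 0 := fun h => hq0 (hφ (by simpa using h))
  -- logarithmic derivative relation
  have E1 : ∀ j, (d : LP n) * (Dop j q * p) = (N : LP n) * (Dop j p * q) := by
    intro j
    have h1 := Dop_pow j q d
    have h2 := Dop_pow j p N
    have key : p ^ N * ((d : LP n) * (Dop j q * p)) = p ^ N * ((N : LP n) * (Dop j p * q)) := by
      calc p ^ N * ((d : LP n) * (Dop j q * p)) = ((d : LP n) * (q ^ d * Dop j q)) * p := by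
            rw [hq]; ring
        _ = Dop j (q ^ d) * q * p := by rw [h1]
        _ = Dop j (p ^ N) * p * q := by rw [hq]; ring
        _ = ((N : LP n) * (p ^ N * Dop j p)) * q := by rw [h2]
        _ = p ^ N * ((N : LP n) * (Dop j p * q)) := by ring
    exact mul_left_cancel₀ (pow_ne_zero N hp) key
  have E2 : ∀ i j, (d : LP n) * (Dop i (Dop j q) * p + Dop j q * Dop i p)
      = (N : LP n) * (Dop i (Dop j p) * q + Dop j p * Dop i q) := by
    intro i j
    have h := congrArg (Dop i) (E1 j)
    simpa only [Dop_mul, Dop_natCast, zero_mul, zero_add] using h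
  -- the scalar λ inside K
  set lamK : K := φ (algebraMap ℂ (LP n) (lam : ℂ)) with hlamK
  have hφℂ : Function.Injective (algebraMap ℂ (LP n)) := RingHom.injective _
  have hdK : ((d : LP n) : LP n) ≠ 0 := by
    rw [← map_natCast (algebraMap ℂ (LP n))]
    intro h
    rw [← map_zero (algebraMap ℂ (LP n))] at h
    exact Nat.cast_ne_zero.mpr hd0 (hφℂ h)
  have hdKK : ((d : K)) ≠ 0 := by
    rw [← map_natCast φ]
    exact fun h => hdK (hφ (by simpa using h))
  have hlamden : (d : LP n) * algebraMap ℂ (LP n) (lam : ℂ) = (N : LP n) := by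
    rw [← map_natCast (algebraMap ℂ (LP n)) d, ← map_natCast (algebraMap ℂ (LP n)) N, ← map_mul]
    congr 1
    have hdc : (d : ℂ) ≠ 0 := Nat.cast_ne_zero.mpr hd0
    rw [Rat.cast_def]
    field_simp
    rw [← hnum, hd]; push_cast; ring
  have hlamdiv : lamK = (N : K) / (d : K) := by
    rw [eq_div_iff hdKK, hlamK, ← map_natCast φ d, ← map_natCast φ N, ← map_mul]
    congr 1
    rw [mul_comm]
    exact hlamden
  -- entrywise equality of the Hessian matrices
  have hent : ∀ i j : Fin n,
      φ (Dop i (Dop j q) * q - Dop i q * Dop j q) / (φ q) ^ 2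
        = lamK * (φ (Dop i (Dop j p) * p - Dop i p * Dop j p) / (φ p) ^ 2) := by
    intro i j
    have e1i := congrArg φ (E1 i)
    have e1j := congrArg φ (E1 j)
    have e2 := congrArg φ (E2 i j)
    simp only [map_mul, map_add, map_natCast] at e1i e1j e2
    have key : (d : K) * ((φ (Dop i (Dop j q)) * φ q - φ (Dop i q) * φ (Dop j q)) * (φ p) ^ 2)
        = (N : K) * ((φ (Dop i (Dop j p)) * φ p - φ (Dop i p) * φ (Dop j p)) * (φ q) ^ 2) := by
      linear_combination (φ p * φ q) * e2 - (φ (Dop i p) * φ q) * e1j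
        - (φ (Dop i q) * φ p) * e1j
    rw [hlamdiv, map_sub, map_sub, map_mul, map_mul, map_mul, map_mul,
      div_mul_div_comm, div_eq_div_iff (pow_ne_zero 2 hQ) (by
        exact mul_ne_zero hdKK (pow_ne_zero 2 hP))]
    linear_combination key
  -- determinant
  have hmat : (fun i j : Fin n =>
        φ (Dop i (Dop j q) * q - Dop i q * Dop j q) / (φ q) ^ 2)
      = lamK • (fun i j : Fin n =>
        φ (Dop i (Dop j p) * p - Dop i p * Dop j p) / (φ p) ^ 2) := by
    funext i j
    exact hent i j
  have hdelta : deltaOp q = lamK ^ n * deltaOp p := by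
    unfold deltaOp
    have h2 : (fun i j : Fin n =>
          φ (Dop i (Dop j q) * q - Dop i q * Dop j q) / (φ q) ^ 2)
        = (lamK • (Matrix.of fun i j : Fin n =>
          φ (Dop i (Dop j p) * p - Dop i p * Dop j p) / (φ p) ^ 2) : Matrix (Fin n) (Fin n) K) := by
      funext i j
      simpa using hent i j
    rw [h2, Matrix.det_smul, Fintype.card_fin]
    rfl
  -- conclude
  unfold muOp
  rw [hdelta, map_pow, map_pow, ← hlamK]
  have hPn : (φ p) ^ (n + 1) ≠ 0 := pow_ne_zero _ hP
  rw [show lamK ^ n * ((φ q) ^ (n + 1) / (φ p) ^ (n + 1)) * ((φ p) ^ (n + 1) * deltaOp p)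
      = lamK ^ n * (φ q) ^ (n + 1) * deltaOp p * ((φ p) ^ (n + 1) / (φ p) ^ (n + 1)) by ring,
    div_self hPn, mul_one]
  ring

end
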